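/- Let X be a topological space and T ∈ Aut(X) of infinite order which is reversible, i.e. admits at least one reversor. If every reversor of T is an involution (every G with G∘T∘G⁻¹ = T⁻¹ satisfies G² = id), then the symmetry group S(X,T) is abelian. -/
import Mathlib


instance homeoGroup (X : Type*) [TopologicalSpace X] : Group (X ≃ₜ X) where
  mul f g := g.trans f
  one := Homeomorph.refl X
  inv := Homeomorph.symm
  mul_assoc _ _ _ := rfl
  one_mul _ := Homeomorph.ext fun _ => rfl
  mul_one _ := Homeomorph.ext fun _ => rfl
  inv_mul_cancel := Homeomorph.self_trans_symm

/-- If $T$ has infinite order, is reversible, and all reversors of $T$ are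
involutions, then the symmetry group $S(X,T)$ is abelian. -/
theorem stmt6 {X : Type*} [TopologicalSpace X] (T : X ≃ₜ X)
    (hT : ∀ n : ℤ, n ≠ 0 → T ^ n ≠ 1)
    (hrev : ∃ G : X ≃ₜ X, G * T * G⁻¹ = T⁻¹)
    (hinv : ∀ G : X ≃ₜ X, G * T * G⁻¹ = T⁻¹ → G ^ 2 = 1) :
    ∀ g ∈ Subgroup.centralizer ({T} : Set (X ≃ₜ X)),
      ∀ h ∈ Subgroup.centralizer ({T} : Set (X ≃ₜ X)), g * h = h * g := by
  obtain ⟨R, hR⟩ := hrev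
  have hR2 : R * R = 1 := by
    have := hinv R hR
    rwa [sq] at this
  have hRinv : R⁻¹ = R := by
    rw [← mul_one R⁻¹, ← hR2, ← mul_assoc, inv_mul_cancel, one_mul]
  -- key : conjugation by R inverts every element of the centralizer
  have key : ∀ g ∈ Subgroup.centralizer ({T} : Set (X ≃ₜ X)), R * g * R = g⁻¹ := by
    intro g hg
    have hgT : g * T * g⁻¹ = T := by
      have := hg T rfl
      rw [← this, mul_assoc, mul_inv_cancel, mul_one]
    have hRg : (R * g) * T * (R * g)⁻¹ = T⁻¹ := by
      rw [mul_inv_rev, show R * g * T * (g⁻¹ * R⁻¹) = R * (g * T * g⁻¹) * R⁻¹ by group,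
        hgT, hR]
    have h2 : (R * g) * (R * g) = 1 := by
      have := hinv _ hRg
      rwa [sq] at this
    calc R * g * R = (R * g * R * g) * g⁻¹ := by group
      _ = g⁻¹ := by rw [show R * g * R * g = (R * g) * (R * g) by group, h2, one_mul]
  intro g hg h hh
  have hgh : g * h ∈ Subgroup.centralizer ({T} : Set (X ≃ₜ X)) := mul_mem hg hh
  have e1 : R * (g * h) * R = (g * h)⁻¹ := key _ hgh
  have e2 : R * (g * h) * R = g⁻¹ * h⁻¹ := by
    have split : (R * g * R) * (R * h * R) = R * (g * h) * R := by
      calc (R * g * R) * (R * h * R) = R * g * (R * R) * h * R := by group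
        _ = R * (g * h) * R := by rw [hR2]; group
    rw [← split, key g hg, key h hh]
  have : (g * h)⁻¹ = g⁻¹ * h⁻¹ := by rw [← e1, e2]
  rw [mul_inv_rev] at this
  have := congrArg Inv.inv this
  simpa [mul_inv_rev] using this
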